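/- For positive reals a_1, ..., a_n and λ > 0, the supremum over nonnegative integers k_1, ..., k_n with Σ_{i=1}^n a_i(2k_i+1) ≤ λ of Π_{i=1}^n (k_i + 1) is at most λ^n/(2^n n^n Π a_i) + C·λ^(n-1) for some constant C depending only on a_1,...,a_n and n. -/
import Mathlib

lemma aux_pow_bound (S lam : ℝ) (hS : 0 ≤ S) (hSl : S ≤ lam) :
    ∀ n : ℕ, 1 ≤ n → (lam + S) ^ n ≤ lam ^ n + 3 ^ n * S * lam ^ (n - 1) := by
  intro n
  induction n with
  | zero => intro h; omega
  | succ m ih =>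
    intro _
    rcases Nat.eq_zero_or_pos m with hm | hm
    · subst hm; simp; nlinarith
    · have hih := ih hm
      have hlam0 : 0 ≤ lam := le_trans hS hSl
      have hpow : lam ^ (m - 1) * lam = lam ^ m := by
        rw [← pow_succ]
        congr 1
        omega
      have h1 : (lam + S) ^ (m + 1) = (lam + S) ^ m * (lam + S) := pow_succ _ _
      have h2 : (lam + S) ^ m * (lam + S) ≤
          (lam ^ m + 3 ^ m * S * lam ^ (m - 1)) * (lam + S) := by
        apply mul_le_mul_of_nonneg_right hih
        linarith
      have hp3 : (0:ℝ) ≤ 3 ^ m := by positivity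
      have hpm : (0:ℝ) ≤ lam ^ m := by positivity
      have hpm1 : (0:ℝ) ≤ lam ^ (m - 1) := by positivity
      have h3 : (lam ^ m + 3 ^ m * S * lam ^ (m - 1)) * (lam + S) ≤
          lam ^ (m + 1) + 3 ^ (m + 1) * S * lam ^ m := by
        have hS2 : 3 ^ m * S * lam ^ (m - 1) * S ≤ 3 ^ m * S * lam ^ m := by
          rw [← hpow]
          have : 3 ^ m * S * lam ^ (m - 1) * S ≤ 3 ^ m * S * lam ^ (m - 1) * lam := by
            apply mul_le_mul_of_nonneg_left hSl
            positivity
          linarith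
        have hexp : lam ^ m * lam = lam ^ (m + 1) := (pow_succ _ _).symm
        have h3m : (3:ℝ) ^ (m + 1) = 3 * 3 ^ m := by ring
        have h13 : (1:ℝ) ≤ 3 ^ m := one_le_pow₀ (by norm_num)
        have h4 : S * lam ^ m ≤ 3 ^ m * (S * lam ^ m) :=
          le_mul_of_one_le_left (mul_nonneg hS hpm) h13
        have e : (lam ^ m + 3 ^ m * S * lam ^ (m - 1)) * (lam + S)
            = lam ^ m * lam + S * lam ^ m + 3 ^ m * S * (lam ^ (m - 1) * lam)
              + 3 ^ m * S * lam ^ (m - 1) * S := by ring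
        rw [e, hpow, hexp, h3m]
        nlinarith [hS2]
      simpa [Nat.add_sub_cancel] using h1 ▸ le_trans h2 h3

theorem stmt_10 (n : ℕ) (hn : 1 ≤ n) (a : Fin n → ℝ) (ha : ∀ i, 0 < a i) :
    ∃ C : ℝ, ∀ lam : ℝ, 0 < lam →
      ∀ k : Fin n → ℕ, ∑ i, a i * (2 * (k i : ℝ) + 1) ≤ lam →
        (∏ i, ((k i : ℝ) + 1)) ≤
          lam ^ n / (2 ^ n * (n : ℝ) ^ n * ∏ i, a i) + C * lam ^ (n - 1) := by
  have hne : Nonempty (Fin n) := Fin.pos_iff_nonempty.mp (by omega)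
  set S : ℝ := ∑ i, a i with hSdef
  have hS0 : 0 < S := Finset.sum_pos (fun i _ => ha i) Finset.univ_nonempty
  have hP : 0 < ∏ i, a i := Finset.prod_pos (fun i _ => ha i)
  have hn0 : (0:ℝ) < (n:ℝ) := by exact_mod_cast hn
  refine ⟨3 ^ n * S / (2 ^ n * (n:ℝ) ^ n * ∏ i, a i), ?_⟩
  intro lam hlam k hk
  have hSlam : S ≤ lam := by
    refine le_trans ?_ hk
    apply Finset.sum_le_sum
    intro i _
    have hki : (0:ℝ) ≤ (k i : ℝ) := Nat.cast_nonneg _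
    nlinarith [ha i]
  -- AM-GM
  set z : Fin n → ℝ := fun i => 2 * a i * ((k i : ℝ) + 1) with hzdef
  have hz : ∀ i ∈ Finset.univ, (0:ℝ) ≤ z i := by
    intro i _
    have : (0:ℝ) ≤ (k i : ℝ) := Nat.cast_nonneg _
    have := (ha i).le
    positivity
  have hw' : ∑ _i : Fin n, ((n:ℝ)⁻¹) = 1 := by
    simp [Finset.sum_const, Finset.card_univ]
    field_simp
  have hamgm := Real.geom_mean_le_arith_mean_weighted Finset.univ
    (fun _ => (n:ℝ)⁻¹) z (fun i _ => by positivity) hw' hz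
  have hprod_eq : ∏ i, z i = (∏ i, z i ^ ((n:ℝ)⁻¹)) ^ n := by
    rw [← Finset.prod_pow]
    refine Finset.prod_congr rfl fun i _ => ?_
    rw [← Real.rpow_natCast (z i ^ ((n:ℝ)⁻¹)) n, ← Real.rpow_mul (hz i (Finset.mem_univ i)),
      inv_mul_cancel₀ (ne_of_gt hn0), Real.rpow_one]
  have hsum_eq : ∑ i, ((n:ℝ)⁻¹) * z i = (∑ i, z i) / n := by
    rw [← Finset.mul_sum]
    field_simp
  have hzsum : ∑ i, z i = (∑ i, a i * (2 * (k i : ℝ) + 1)) + S := by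
    rw [hSdef, ← Finset.sum_add_distrib]
    exact Finset.sum_congr rfl fun i _ => by ring
  have hzsum_le : ∑ i, z i ≤ lam + S := by rw [hzsum]; linarith
  have hgm_nonneg : 0 ≤ ∏ i, z i ^ ((n:ℝ)⁻¹) :=
    Finset.prod_nonneg fun i _ => Real.rpow_nonneg (hz i (Finset.mem_univ i)) _
  have hkey : ∏ i, z i ≤ ((lam + S) / n) ^ n := by
    rw [hprod_eq]
    apply pow_le_pow_left₀ hgm_nonneg
    calc ∏ i, z i ^ ((n:ℝ)⁻¹) ≤ ∑ i, ((n:ℝ)⁻¹) * z i := hamgm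
      _ = (∑ i, z i) / n := hsum_eq
      _ ≤ (lam + S) / n := by gcongr
  have hzprod : ∏ i, z i = 2 ^ n * (∏ i, a i) * ∏ i, ((k i : ℝ) + 1) := by
    simp only [hzdef]
    rw [Finset.prod_mul_distrib, Finset.prod_mul_distrib, Finset.prod_const,
      Finset.card_univ, Fintype.card_fin]
  have hD : (0:ℝ) < 2 ^ n * (n:ℝ) ^ n * ∏ i, a i := by positivity
  have h1 : ∏ i, ((k i : ℝ) + 1) ≤ (lam + S) ^ n / (2 ^ n * (n:ℝ) ^ n * ∏ i, a i) := by
    rw [le_div_iff₀ hD]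
    have h2 := mul_le_mul_of_nonneg_right hkey (le_of_lt (pow_pos hn0 n))
    have hr : ((lam + S) / n) ^ n * (n:ℝ) ^ n = (lam + S) ^ n := by
      rw [div_pow]; field_simp
    have hl : (∏ i, ((k i : ℝ) + 1)) * (2 ^ n * (n:ℝ) ^ n * ∏ i, a i)
        = (∏ i, z i) * (n:ℝ) ^ n := by rw [hzprod]; ring
    rw [hl]
    linarith
  have h2 := aux_pow_bound S lam hS0.le hSlam n hn
  calc ∏ i, ((k i : ℝ) + 1)
      ≤ (lam + S) ^ n / (2 ^ n * (n:ℝ) ^ n * ∏ i, a i) := h1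
    _ ≤ (lam ^ n + 3 ^ n * S * lam ^ (n - 1)) / (2 ^ n * (n:ℝ) ^ n * ∏ i, a i) := by
        gcongr
    _ = lam ^ n / (2 ^ n * (n:ℝ) ^ n * ∏ i, a i)
        + 3 ^ n * S / (2 ^ n * (n:ℝ) ^ n * ∏ i, a i) * lam ^ (n - 1) := by
        rw [add_div]; ring
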